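/- GHZ-like output genuine multipartite entanglement (n = 3 case): if ⟨φᵢ| (ŨᵢUᵢ)†(UᵢŨᵢ) |φᵢ⟩ = 0 for i = 0,1,2, then the normalized state ψ ∝ (⊗ᵢ₌₀² UᵢŨᵢ + ⊗ᵢ₌₀² ŨᵢUᵢ)(|φ₀φ₁φ₂⟩) has all three single-qubit reduced density matrices equal to (1/2)·I; in particular Tr(ρᵢ²) = 1/2 for each i, so the GME concurrence C_GME(ψ) = √(2·min_i(1 − Tr ρᵢ²)) equals 1. -/
import Mathlib


open Matrix Complex

noncomputable section

abbrev Q3 := Fin 2 × Fin 2 × Fin 2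

def inner2 (u v : Fin 2 → ℂ) : ℂ := ∑ i, star (u i) * v i

def tens3 (a b c : Fin 2 → ℂ) : Q3 → ℂ := fun p => a p.1 * b p.2.1 * c p.2.2

/-- Tensor product of three single-qubit operators. -/
def kron3 (A B C : Matrix (Fin 2) (Fin 2) ℂ) : Matrix Q3 Q3 ℂ :=
  Matrix.of fun p q => A p.1 q.1 * B p.2.1 q.2.1 * C p.2.2 q.2.2

/-- Single-qubit reduced density matrices of a three-qubit pure state. -/
def rdm0 (ψ : Q3 → ℂ) : Matrix (Fin 2) (Fin 2) ℂ :=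
  Matrix.of fun i j => ∑ k, ∑ l, ψ (i, k, l) * star (ψ (j, k, l))
def rdm1 (ψ : Q3 → ℂ) : Matrix (Fin 2) (Fin 2) ℂ :=
  Matrix.of fun i j => ∑ k, ∑ l, ψ (k, i, l) * star (ψ (k, j, l))
def rdm2 (ψ : Q3 → ℂ) : Matrix (Fin 2) (Fin 2) ℂ :=
  Matrix.of fun i j => ∑ k, ∑ l, ψ (k, l, i) * star (ψ (k, l, j))

/-- The GME concurrence `√(2·min_i(1 − Tr ρᵢ²))` of a three-qubit pure state. -/
def gmeConcurrence (ψ : Q3 → ℂ) : ℝ :=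
  Real.sqrt (2 * min (min (1 - ((rdm0 ψ * rdm0 ψ).trace).re)
      (1 - ((rdm1 ψ * rdm1 ψ).trace).re)) (1 - ((rdm2 ψ * rdm2 ψ).trace).re))

/-! ### Auxiliary lemmas -/

lemma inner2_mulVec (M : Matrix (Fin 2) (Fin 2) ℂ) (hM : Mᴴ * M = 1)
    (u v : Fin 2 → ℂ) : inner2 (M.mulVec u) (M.mulVec v) = inner2 u v := by
  have h := fun j k => congrFun (congrFun hM j) k
  simp only [Matrix.mul_apply, Matrix.conjTranspose_apply, Matrix.one_apply,
    Fin.sum_univ_two] at h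
  simp only [inner2, Matrix.mulVec, dotProduct, Fin.sum_univ_two, star_add, star_mul']
  have h00 := h 0 0; have h01 := h 0 1; have h10 := h 1 0; have h11 := h 1 1
  simp only [if_pos rfl, if_neg (by decide : (0:Fin 2) ≠ 1),
    if_neg (by decide : (1:Fin 2) ≠ 0), reduceIte] at h00 h01 h10 h11
  linear_combination (star (u 0) * v 0) * h00 + (star (u 0) * v 1) * h01 +
    (star (u 1) * v 0) * h10 + (star (u 1) * v 1) * h11

lemma key2 (u v : Fin 2 → ℂ) (hu : inner2 u u = 1) (hv : inner2 v v = 1)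
    (huv : inner2 u v = 0) (i j : Fin 2) :
    u i * star (u j) + v i * star (v j) = (1 : Matrix (Fin 2) (Fin 2) ℂ) i j := by
  have hvu : inner2 v u = 0 := by
    have := congrArg star huv
    simpa [inner2, mul_comm, Fin.sum_univ_two] using this
  simp only [inner2, Fin.sum_univ_two] at hu hv huv hvu
  set M : Matrix (Fin 2) (Fin 2) ℂ := Matrix.of fun i j => if j = 0 then u i else v i with hMdef
  have h1 : Mᴴ * M = 1 := by
    ext p q
    fin_cases p <;> fin_cases q <;>
      simp only [hMdef, Matrix.mul_apply, Matrix.conjTranspose_apply, Matrix.one_apply,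
        Fin.sum_univ_two, Matrix.of_apply, if_pos rfl, reduceIte] <;>
      [exact hu; exact huv; exact hvu; exact hv]
  have h2 : M * Mᴴ = 1 := mul_eq_one_comm.mp h1
  have := congrFun (congrFun h2 i) j
  simpa [hMdef, Matrix.mul_apply, Matrix.conjTranspose_apply, Fin.sum_univ_two] using this

lemma kron3_mulVec (A B C : Matrix (Fin 2) (Fin 2) ℂ) (x y z : Fin 2 → ℂ) :
    (kron3 A B C).mulVec (tens3 x y z) = tens3 (A.mulVec x) (B.mulVec y) (C.mulVec z) := by
  funext p
  simp only [Matrix.mulVec, dotProduct, kron3, tens3, Matrix.of_apply, Fintype.sum_prod_type,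
    Fin.sum_univ_two]
  ring

/-- under the orthogonality conditions, the normalized GHZ-type switch output
has all single-qubit reduced density matrices equal to `(1/2)·I`, hence `Tr ρᵢ² = 1/2` and
GME concurrence `1`. -/
theorem switch_output_GME
    (U Ut : Fin 3 → Matrix (Fin 2) (Fin 2) ℂ)
    (hU : ∀ i, U i ∈ Matrix.unitaryGroup (Fin 2) ℂ)
    (hUt : ∀ i, Ut i ∈ Matrix.unitaryGroup (Fin 2) ℂ)
    (φ : Fin 3 → (Fin 2 → ℂ)) (hφ : ∀ i, inner2 (φ i) (φ i) = 1)
    (horth : ∀ i, inner2 ((Ut i * U i).mulVec (φ i)) ((U i * Ut i).mulVec (φ i)) = 0) :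
    let ψ := ((Real.sqrt 2 : ℝ) : ℂ)⁻¹ •
      ((kron3 (U 0 * Ut 0) (U 1 * Ut 1) (U 2 * Ut 2) +
        kron3 (Ut 0 * U 0) (Ut 1 * U 1) (Ut 2 * U 2)).mulVec (tens3 (φ 0) (φ 1) (φ 2)))
    rdm0 ψ = (1 / 2 : ℂ) • (1 : Matrix (Fin 2) (Fin 2) ℂ) ∧
    rdm1 ψ = (1 / 2 : ℂ) • (1 : Matrix (Fin 2) (Fin 2) ℂ) ∧
    rdm2 ψ = (1 / 2 : ℂ) • (1 : Matrix (Fin 2) (Fin 2) ℂ) ∧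
    ((rdm0 ψ * rdm0 ψ).trace).re = 1 / 2 ∧
    ((rdm1 ψ * rdm1 ψ).trace).re = 1 / 2 ∧
    ((rdm2 ψ * rdm2 ψ).trace).re = 1 / 2 ∧
    gmeConcurrence ψ = 1 := by
  intro ψ
  set c : ℂ := ((Real.sqrt 2 : ℝ) : ℂ)⁻¹ with hc
  set a : Fin 3 → (Fin 2 → ℂ) := fun i => (U i * Ut i).mulVec (φ i) with ha
  set b : Fin 3 → (Fin 2 → ℂ) := fun i => (Ut i * U i).mulVec (φ i) with hb
  have hsc : star c = c := by
    rw [hc]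
    simp [← Complex.ofReal_inv]
  have hcc : c * c = (1 / 2 : ℂ) := by
    rw [hc, ← mul_inv, ← Complex.ofReal_mul, Real.mul_self_sqrt (by norm_num)]
    norm_num
  have hψ : ∀ p, ψ p = c * (tens3 (a 0) (a 1) (a 2) p + tens3 (b 0) (b 1) (b 2) p) := by
    intro p
    show (c • ((kron3 _ _ _ + kron3 _ _ _).mulVec (tens3 (φ 0) (φ 1) (φ 2)))) p = _
    rw [Matrix.add_mulVec, kron3_mulVec, kron3_mulVec]
    simp [ha, hb, smul_eq_mul]
  have key : ∀ (M : Matrix (Fin 2) (Fin 2) ℂ), M ∈ Matrix.unitaryGroup (Fin 2) ℂ →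
      Mᴴ * M = 1 := by
    intro M h
    simpa [Matrix.star_eq_conjTranspose] using h.1
  have hAA : ∀ i, inner2 (a i) (a i) = 1 := by
    intro i
    rw [ha, inner2_mulVec _ (key _ (mul_mem (hU i) (hUt i)))]
    exact hφ i
  have hBB : ∀ i, inner2 (b i) (b i) = 1 := by
    intro i
    rw [hb, inner2_mulVec _ (key _ (mul_mem (hUt i) (hU i)))]
    exact hφ i
  have hBA : ∀ i, inner2 (b i) (a i) = 0 := horth
  have hAB : ∀ i, inner2 (a i) (b i) = 0 := by
    intro i
    have := congrArg star (hBA i)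
    simpa [inner2, mul_comm, Fin.sum_univ_two] using this
  -- expanded scalar versions (`star` of the inner-product equations)
  have SAA : ∀ i, a i 0 * star (a i 0) + a i 1 * star (a i 1) = 1 := by
    intro i
    have := congrArg star (hAA i)
    simpa [inner2, mul_comm, Fin.sum_univ_two] using this
  have SBB : ∀ i, b i 0 * star (b i 0) + b i 1 * star (b i 1) = 1 := by
    intro i
    have := congrArg star (hBB i)
    simpa [inner2, mul_comm, Fin.sum_univ_two] using this
  have SAB : ∀ i, a i 0 * star (b i 0) + a i 1 * star (b i 1) = 0 := by
    intro i
    have := congrArg star (hAB i)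
    simpa [inner2, mul_comm, Fin.sum_univ_two] using this
  have SBA : ∀ i, b i 0 * star (a i 0) + b i 1 * star (a i 1) = 0 := by
    intro i
    have := congrArg star (hBA i)
    simpa [inner2, mul_comm, Fin.sum_univ_two] using this
  have h0 : rdm0 ψ = (1 / 2 : ℂ) • (1 : Matrix (Fin 2) (Fin 2) ℂ) := by
    ext i j
    have e : rdm0 ψ i j = (1 / 2 : ℂ) * (a 0 i * star (a 0 j) + b 0 i * star (b 0 j)) := by
      simp only [rdm0, Matrix.of_apply, Fin.sum_univ_two, hψ, tens3, star_mul', star_add, hsc]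
      linear_combination
        c * c * ( a 0 i * star (a 0 j) *
            ((a 2 0 * star (a 2 0) + a 2 1 * star (a 2 1)) * SAA 1 + SAA 2)
          + a 0 i * star (b 0 j) * (a 2 0 * star (b 2 0) + a 2 1 * star (b 2 1)) * SAB 1
          + b 0 i * star (a 0 j) * (b 2 0 * star (a 2 0) + b 2 1 * star (a 2 1)) * SBA 1
          + b 0 i * star (b 0 j) *
            ((b 2 0 * star (b 2 0) + b 2 1 * star (b 2 1)) * SBB 1 + SBB 2) )
        + (a 0 i * star (a 0 j) + b 0 i * star (b 0 j)) * hcc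
    rw [e, key2 (a 0) (b 0) (hAA 0) (hBB 0) (hAB 0) i j]
    simp [Matrix.smul_apply, smul_eq_mul]
  have h1 : rdm1 ψ = (1 / 2 : ℂ) • (1 : Matrix (Fin 2) (Fin 2) ℂ) := by
    ext i j
    have e : rdm1 ψ i j = (1 / 2 : ℂ) * (a 1 i * star (a 1 j) + b 1 i * star (b 1 j)) := by
      simp only [rdm1, Matrix.of_apply, Fin.sum_univ_two, hψ, tens3, star_mul', star_add, hsc]
      linear_combination
        c * c * ( a 1 i * star (a 1 j) *
            ((a 2 0 * star (a 2 0) + a 2 1 * star (a 2 1)) * SAA 0 + SAA 2)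
          + a 1 i * star (b 1 j) * (a 2 0 * star (b 2 0) + a 2 1 * star (b 2 1)) * SAB 0
          + b 1 i * star (a 1 j) * (b 2 0 * star (a 2 0) + b 2 1 * star (a 2 1)) * SBA 0
          + b 1 i * star (b 1 j) *
            ((b 2 0 * star (b 2 0) + b 2 1 * star (b 2 1)) * SBB 0 + SBB 2) )
        + (a 1 i * star (a 1 j) + b 1 i * star (b 1 j)) * hcc
    rw [e, key2 (a 1) (b 1) (hAA 1) (hBB 1) (hAB 1) i j]
    simp [Matrix.smul_apply, smul_eq_mul]
  have h2 : rdm2 ψ = (1 / 2 : ℂ) • (1 : Matrix (Fin 2) (Fin 2) ℂ) := by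
    ext i j
    have e : rdm2 ψ i j = (1 / 2 : ℂ) * (a 2 i * star (a 2 j) + b 2 i * star (b 2 j)) := by
      simp only [rdm2, Matrix.of_apply, Fin.sum_univ_two, hψ, tens3, star_mul', star_add, hsc]
      linear_combination
        c * c * ( a 2 i * star (a 2 j) *
            ((a 1 0 * star (a 1 0) + a 1 1 * star (a 1 1)) * SAA 0 + SAA 1)
          + a 2 i * star (b 2 j) * (a 1 0 * star (b 1 0) + a 1 1 * star (b 1 1)) * SAB 0
          + b 2 i * star (a 2 j) * (b 1 0 * star (a 1 0) + b 1 1 * star (a 1 1)) * SBA 0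
          + b 2 i * star (b 2 j) *
            ((b 1 0 * star (b 1 0) + b 1 1 * star (b 1 1)) * SBB 0 + SBB 1) )
        + (a 2 i * star (a 2 j) + b 2 i * star (b 2 j)) * hcc
    rw [e, key2 (a 2) (b 2) (hAA 2) (hBB 2) (hAB 2) i j]
    simp [Matrix.smul_apply, smul_eq_mul]
  have tr : ∀ (ρ : Matrix (Fin 2) (Fin 2) ℂ),
      ρ = (1 / 2 : ℂ) • (1 : Matrix (Fin 2) (Fin 2) ℂ) → ((ρ * ρ).trace).re = 1 / 2 := by
    intro ρ h
    rw [h]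
    norm_num [Matrix.smul_mul, Matrix.mul_smul, Matrix.trace_smul, Matrix.trace_one]
  have t0 := tr _ h0
  have t1 := tr _ h1
  have t2 := tr _ h2
  refine ⟨h0, h1, h2, t0, t1, t2, ?_⟩
  unfold gmeConcurrence
  rw [t0, t1, t2]
  norm_num
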